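/- Let r be a real number with 0 < r < 1 and define the polynomial function F : ℝ → ℝ by F(z) = (1 - z²)(2r²z² + r(6 - 2r²)z + (6 - 4r²)) / (2(3 - r²)). Then the second derivative of F vanishes at z = -1/r, i.e. F''(-1/r) = 0. (This is the extremality condition for the admissible Kähler metric determined by Θ(z) = F(z)/(1 + rz).) -/

import Mathlib

open Polynomial

/-- For `0 < r < 1`, the polynomial
`F(z) = (1-z²)(2r²z² + r(6-2r²)z + (6-4r²)) / (2(3-r²))` satisfies the extremality
condition `F''(-1/r) = 0`. -/
theorem extremal_condition_F (r : ℝ) (hr0 : 0 < r) (hr1 : r < 1) (F : ℝ → ℝ)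
    (hF : ∀ z : ℝ, F z =
      (1 - z ^ 2) * (2 * r ^ 2 * z ^ 2 + r * (6 - 2 * r ^ 2) * z + (6 - 4 * r ^ 2)) /
        (2 * (3 - r ^ 2))) :
    deriv (deriv F) (-1 / r) = 0 := by
  have hc : (2 * (3 - r ^ 2)) ≠ 0 := by nlinarith
  have hrne : r ≠ 0 := ne_of_gt hr0
  set p : ℝ[X] :=
    (C 1 - X ^ 2) * (C (2 * r ^ 2) * X ^ 2 + C (r * (6 - 2 * r ^ 2)) * X + C (6 - 4 * r ^ 2)) *
      C (2 * (3 - r ^ 2))⁻¹ with hp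
  have hFe : F = fun z => p.eval z := by
    funext z
    rw [hF, hp]
    simp [div_eq_mul_inv]
  have h1 : deriv F = fun z => (derivative p).eval z := by
    funext z
    rw [hFe]
    exact Polynomial.deriv p
  rw [h1]
  rw [Polynomial.deriv (derivative p)]
  rw [hp]
  simp only [derivative_mul, derivative_C, derivative_X_pow, derivative_add, derivative_sub,
    derivative_X, derivative_one, derivative_zero]
  simp only [eval_mul, eval_add, eval_sub, eval_C, eval_X, eval_pow, eval_one, eval_natCast,
    eval_mul_X, eval_zero, zero_mul, mul_zero, add_zero, zero_add, mul_one]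
  field_simp
  have hri : r * r⁻¹ = 1 := mul_inv_cancel₀ hrne
  linear_combination (-(3 - r ^ 2)⁻¹ * (16 * (r * r⁻¹) - 8 + 8 * r ^ 2)) * hri
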